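/- Let S be a set of n points in PG(d,ℝ) such that every d points of S span a hyperplane, and let τ_{d+i} denote the number of hyperplanes containing exactly d+i points of S. Then the sum over i from 1 to n−d−1 of (n−d−i)·binomial(d+i, i−1)·τ_{d+i} is at most binomial(n, d+2). -/

import Mathlib

open Module

namespace Stmt3Aux

variable {d : ℕ}

noncomputable def sp (T : Finset (Projectivization ℝ (Fin (d+1) → ℝ))) :
    Submodule ℝ (Fin (d+1) → ℝ) :=
  ⨆ p ∈ T, p.submodule

lemma sp_def (T : Finset (Projectivization ℝ (Fin (d+1) → ℝ))) :
    sp T = ⨆ p ∈ T, p.submodule := rfl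

lemma sp_mono {T T' : Finset (Projectivization ℝ (Fin (d+1) → ℝ))} (h : T ⊆ T') :
    sp T ≤ sp T' := by
  apply biSup_mono h

lemma le_sp {T : Finset (Projectivization ℝ (Fin (d+1) → ℝ))} {p} (hp : p ∈ T) :
    p.submodule ≤ sp T := le_biSup _ hp

lemma sp_le {T : Finset (Projectivization ℝ (Fin (d+1) → ℝ))}
    {H : Submodule ℝ (Fin (d+1) → ℝ)} (h : ∀ p ∈ T, p.submodule ≤ H) : sp T ≤ H :=
  iSup₂_le h

lemma sp_insert (p : Projectivization ℝ (Fin (d+1) → ℝ))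
    (T : Finset (Projectivization ℝ (Fin (d+1) → ℝ))) [DecidableEq (Projectivization ℝ (Fin (d+1) → ℝ))] :
    sp (insert p T) = p.submodule ⊔ sp T := by
  rw [sp_def, sp_def, Finset.iSup_insert]

lemma sp_union (A B : Finset (Projectivization ℝ (Fin (d+1) → ℝ)))
    [DecidableEq (Projectivization ℝ (Fin (d+1) → ℝ))] :
    sp (A ∪ B) = sp A ⊔ sp B := by
  rw [sp_def, sp_def, sp_def, Finset.iSup_union]

lemma finrank_sp_le (T : Finset (Projectivization ℝ (Fin (d+1) → ℝ))) :
    finrank ℝ (sp T) ≤ T.card := by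
  classical
  induction T using Finset.induction with
  | empty => rw [Finset.card_empty, le_bot_iff.1 (sp_le (T := ∅) (H := ⊥) (by simp))]; simp
  | @insert a s ha ih =>
    rw [sp_insert, Finset.card_insert_of_notMem ha]
    calc finrank ℝ ↥(a.submodule ⊔ sp s)
        ≤ finrank ℝ a.submodule + finrank ℝ (sp s) :=
          Submodule.finrank_add_le_finrank_add_finrank _ _
      _ ≤ 1 + s.card := by
          rw [a.finrank_submodule]; omega
      _ = s.card + 1 := by omega

end Stmt3Aux

open Module Stmt3Aux in
/-- The secant-count inequality:
`∑_{i=1}^{n-d-1} (n-d-i) C(d+i, i-1) τ_{d+i} ≤ C(n, d+2)`. -/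
theorem stmt3 (d n : ℕ) (hd : 1 ≤ d)
    (S : Finset (Projectivization ℝ (Fin (d+1) → ℝ))) (hcard : S.card = n)
    (hspan : ∀ T ⊆ S, T.card = d →
      finrank ℝ ↥(⨆ p ∈ T, Projectivization.submodule p) = d)
    (htop : (⨆ p ∈ S, Projectivization.submodule p) = ⊤)
    (τ : ℕ → ℕ)
    (hτ : ∀ i, τ i = {H : Submodule ℝ (Fin (d+1) → ℝ) | finrank ℝ ↥H = d ∧
      {p ∈ (S : Set (Projectivization ℝ (Fin (d+1) → ℝ))) | p.submodule ≤ H}.ncard = i}.ncard) :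
    ∑ i ∈ Finset.Icc 1 (n - d - 1), (n - d - i) * ((d + i).choose (i - 1)) * τ (d + i)
      ≤ n.choose (d + 2) := by
  classical
  rcases le_or_gt n (d+1) with hn | hn
  · have : n - d - 1 = 0 := by omega
    simp [this]
  -- now d + 2 ≤ n
  have hspan' : ∀ T ⊆ S, T.card = d → finrank ℝ (sp T) = d := hspan
  have hVrank : finrank ℝ (Fin (d+1) → ℝ) = d + 1 := Module.finrank_fin_fun ℝ
  -- lower bound on rank of spans of subsets of S
  have h1 : ∀ T : Finset (Projectivization ℝ (Fin (d+1) → ℝ)), T ⊆ S → d ≤ T.card →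
      d ≤ finrank ℝ (sp T) := by
    intro T hTS hTc
    obtain ⟨T₀, hT₀T, hT₀c⟩ := Finset.exists_subset_card_eq hTc
    calc d = finrank ℝ (sp T₀) := (hspan' T₀ (hT₀T.trans hTS) hT₀c).symm
      _ ≤ finrank ℝ (sp T) := Submodule.finrank_mono (sp_mono hT₀T)
  -- spanning lemma
  have h3 : ∀ (A : Finset (Projectivization ℝ (Fin (d+1) → ℝ)))
      (p : Projectivization ℝ (Fin (d+1) → ℝ)), finrank ℝ (sp A) = d →
      ¬ p.submodule ≤ sp A → finrank ℝ (sp (insert p A)) = d + 1 := by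
    intro A p hA hp
    have hlt : sp A < sp (insert p A) := by
      refine lt_of_le_of_ne (sp_mono (Finset.subset_insert _ _)) fun h => hp ?_
      rw [h]; exact le_sp (Finset.mem_insert_self _ _)
    have := Submodule.finrank_lt_finrank_of_lt hlt
    have h2 := Submodule.finrank_le (sp (insert p A))
    omega
  -- the closure operator
  set cl : Finset (Projectivization ℝ (Fin (d+1) → ℝ)) →
      Finset (Projectivization ℝ (Fin (d+1) → ℝ)) :=
    fun A => S.filter (fun q => q.submodule ≤ sp A) with hcl
  set Δ : Finset (Finset (Projectivization ℝ (Fin (d+1) → ℝ))) :=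
    (S.powersetCard (d+1)).filter (fun A => finrank ℝ (sp A) = d) with hΔ
  have hΔmem : ∀ A ∈ Δ, A ⊆ S ∧ A.card = d + 1 ∧ finrank ℝ (sp A) = d := by
    intro A hA
    simp only [hΔ, Finset.mem_filter, Finset.mem_powersetCard] at hA
    exact ⟨hA.1.1, hA.1.2, hA.2⟩
  have hsubcl : ∀ A ∈ Δ, A ⊆ cl A := by
    intro A hA q hq
    exact Finset.mem_filter.2 ⟨(hΔmem A hA).1 hq, le_sp hq⟩
  have hspcl : ∀ A ∈ Δ, sp (cl A) = sp A := by
    intro A hA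
    refine le_antisymm (sp_le fun q hq => (Finset.mem_filter.1 hq).2)
      (sp_mono (hsubcl A hA))
  -- uniqueness
  have huniq : ∀ A ∈ Δ, ∀ A' ∈ Δ, ∀ p ∈ S \ cl A, ∀ p' ∈ S \ cl A',
      insert p A = insert p' A' → A = A' ∧ p = p' := by
    intro A hA A' hA' p hp p' hp' heq
    obtain ⟨hAS, hAc, hAr⟩ := hΔmem A hA
    obtain ⟨hA'S, hA'c, hA'r⟩ := hΔmem A' hA'
    rw [Finset.mem_sdiff] at hp hp'
    have hpA : p ∉ A := fun h => hp.2 (hsubcl A hA h)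
    have hp'A' : p' ∉ A' := fun h => hp'.2 (hsubcl A' hA' h)
    have hpsp : ¬ p.submodule ≤ sp A := by
      intro h; exact hp.2 (Finset.mem_filter.2 ⟨hp.1, h⟩)
    have hAA' : A = A' := by
      by_contra hne
      have hTc : (insert p A).card = d + 2 := by
        rw [Finset.card_insert_of_notMem hpA]; omega
      have hsub : A ∪ A' ⊆ insert p A :=
        Finset.union_subset (Finset.subset_insert _ _) (heq ▸ Finset.subset_insert _ _)
      have hlt : d + 1 < (A ∪ A').card := by
        have hns : ¬ A' ⊆ A := fun h =>
          hne (Finset.eq_of_subset_of_card_le h (by omega)).symm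
        obtain ⟨x, hxA', hxA⟩ := Finset.not_subset.1 hns
        have : A.card < (A ∪ A').card :=
          Finset.card_lt_card ⟨Finset.subset_union_left,
            fun h => hxA (h (Finset.mem_union_right _ hxA'))⟩
        omega
      have hunion : A ∪ A' = insert p A := by
        refine Finset.eq_of_subset_of_card_le hsub ?_
        omega
      have hinter : (A ∩ A').card = d := by
        have h4 := Finset.card_union_add_card_inter A A'
        rw [hunion, hTc] at h4; omega
      have hrI : finrank ℝ (sp (A ∩ A')) = d :=
        hspan' _ ((Finset.inter_subset_left).trans hAS) hinter
      have hIA : sp (A ∩ A') = sp A :=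
        Submodule.eq_of_le_of_finrank_eq (sp_mono Finset.inter_subset_left)
          (by rw [hrI, hAr])
      have hIA' : sp (A ∩ A') = sp A' :=
        Submodule.eq_of_le_of_finrank_eq (sp_mono Finset.inter_subset_right)
          (by rw [hrI, hA'r])
      have hspT : sp (insert p A) = sp A := by
        rw [← hunion, sp_union, ← hIA', hIA, sup_idem]
      have h5 := h3 A p hAr hpsp
      rw [hspT, hAr] at h5
      omega
    refine ⟨hAA', ?_⟩
    have hmem : p' ∈ insert p A := by rw [heq]; exact Finset.mem_insert_self _ _
    rcases Finset.mem_insert.1 hmem with h | h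
    · exact h.symm
    · subst hAA'; exact absurd h hp'A'
  -- the big family of closed sets
  set Call : Finset (Finset (Projectivization ℝ (Fin (d+1) → ℝ))) :=
    S.powerset.filter (fun B => d + 1 ≤ B.card ∧ finrank ℝ (sp B) = d ∧
      ∀ q ∈ S, q.submodule ≤ sp B → q ∈ B) with hCall
  have hclmem : ∀ A ∈ Δ, cl A ∈ Call := by
    intro A hA
    obtain ⟨hAS, hAc, hAr⟩ := hΔmem A hA
    refine Finset.mem_filter.2 ⟨Finset.mem_powerset.2 (Finset.filter_subset _ _), ?_, ?_, ?_⟩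
    · calc d + 1 = A.card := hAc.symm
        _ ≤ (cl A).card := Finset.card_le_card (hsubcl A hA)
    · rw [hspcl A hA]; exact hAr
    · intro q hq hle
      rw [hspcl A hA] at hle
      exact Finset.mem_filter.2 ⟨hq, hle⟩
  have hfiber : ∀ B ∈ Call, Δ.filter (fun A => cl A = B) = B.powersetCard (d+1) := by
    intro B hB
    have hB' := Finset.mem_filter.1 hB
    have hBS : B ⊆ S := Finset.mem_powerset.1 hB'.1
    obtain ⟨hBc, hBr, hBcl⟩ := hB'.2
    ext A
    simp only [Finset.mem_filter, Finset.mem_powersetCard]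
    constructor
    · rintro ⟨hAΔ, rfl⟩
      exact ⟨hsubcl A hAΔ, (hΔmem A hAΔ).2.1⟩
    · rintro ⟨hAB, hAc⟩
      have hAS : A ⊆ S := hAB.trans hBS
      have hrle : finrank ℝ (sp A) ≤ d :=
        le_of_le_of_eq (Submodule.finrank_mono (sp_mono hAB)) hBr
      have hrge : d ≤ finrank ℝ (sp A) := h1 A hAS (by omega)
      have hAr : finrank ℝ (sp A) = d := le_antisymm hrle hrge
      have hAΔ : A ∈ Δ := Finset.mem_filter.2 ⟨Finset.mem_powersetCard.2 ⟨hAS, hAc⟩, hAr⟩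
      refine ⟨hAΔ, ?_⟩
      have hspAB : sp A = sp B :=
        Submodule.eq_of_le_of_finrank_eq (sp_mono hAB) (by rw [hAr, hBr])
      apply Finset.Subset.antisymm
      · intro q hq
        obtain ⟨hqS, hqle⟩ := Finset.mem_filter.1 hq
        rw [hspAB] at hqle
        exact hBcl q hqS hqle
      · intro q hq
        refine Finset.mem_filter.2 ⟨hBS hq, ?_⟩
        rw [hspAB]
        exact le_sp hq
  have hτ' : ∀ j, d + 1 ≤ j → τ j = (Call.filter (fun B => B.card = j)).card := by
    intro j hj
    rw [hτ j]
    have himg : {H : Submodule ℝ (Fin (d+1) → ℝ) | finrank ℝ H = d ∧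
        {p ∈ (S : Set (Projectivization ℝ (Fin (d+1) → ℝ))) | p.submodule ≤ H}.ncard = j}
        = sp '' ((Call.filter (fun B => B.card = j) : Finset _) : Set (Finset _)) := by
      ext H
      simp only [Set.mem_setOf_eq, Set.mem_image, Finset.mem_coe]
      constructor
      · rintro ⟨hHr, hHn⟩
        set B := S.filter (fun p => p.submodule ≤ H) with hB
        have hset : {p : Projectivization ℝ (Fin (d+1) → ℝ) | p ∈ S ∧ p.submodule ≤ H}
            = (B : Set (Projectivization ℝ (Fin (d+1) → ℝ))) := by
          ext p; simp [hB]
        have hBcard : B.card = j := by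
          rw [hset, Set.ncard_coe_finset] at hHn; exact hHn
        have hBS : B ⊆ S := Finset.filter_subset _ _
        obtain ⟨T₀, hT₀B, hT₀c⟩ := Finset.exists_subset_card_eq (show d ≤ B.card by omega)
        have hT₀r : finrank ℝ (sp T₀) = d := hspan' T₀ (hT₀B.trans hBS) hT₀c
        have hT₀H : sp T₀ ≤ H := sp_le fun p hp => (Finset.mem_filter.1 (hT₀B hp)).2
        have hTH : sp T₀ = H := Submodule.eq_of_le_of_finrank_eq hT₀H (by rw [hT₀r, hHr])
        have hspB : sp B = H := le_antisymm (sp_le fun p hp => (Finset.mem_filter.1 hp).2)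
          (hTH ▸ sp_mono hT₀B)
        refine ⟨B, ?_, hspB⟩
        refine Finset.mem_filter.2 ⟨Finset.mem_filter.2 ⟨Finset.mem_powerset.2 hBS,
          by omega, by rw [hspB]; exact hHr, ?_⟩, hBcard⟩
        intro q hq hle
        rw [hspB] at hle
        exact Finset.mem_filter.2 ⟨hq, hle⟩
      · rintro ⟨B, hBC, rfl⟩
        obtain ⟨hBCall, hBcard⟩ := Finset.mem_filter.1 hBC
        obtain ⟨hBS', hBc', hBr', hBcl'⟩ := Finset.mem_filter.1 hBCall
        refine ⟨hBr', ?_⟩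
        have hset : {p : Projectivization ℝ (Fin (d+1) → ℝ) | p ∈ S ∧ p.submodule ≤ sp B}
            = (B : Set (Projectivization ℝ (Fin (d+1) → ℝ))) := by
          ext p
          simp only [Set.mem_setOf_eq, Finset.mem_coe]
          constructor
          · rintro ⟨hpS, hple⟩; exact hBcl' p hpS hple
          · intro hp; exact ⟨Finset.mem_powerset.1 hBS' hp, le_sp hp⟩
        rw [hset, Set.ncard_coe_finset, hBcard]
    have hinj : Set.InjOn sp ((Call.filter (fun B => B.card = j) : Finset _) :
        Set (Finset (Projectivization ℝ (Fin (d+1) → ℝ)))) := by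
      intro B hB B' hB' hEq
      simp only [Finset.mem_coe, Finset.mem_filter] at hB hB'
      obtain ⟨hB1, _⟩ := hB
      obtain ⟨hB1', _⟩ := hB'
      obtain ⟨hBS, _, _, hBcl⟩ := Finset.mem_filter.1 hB1
      obtain ⟨hBS', _, _, hBcl'⟩ := Finset.mem_filter.1 hB1'
      ext q
      constructor
      · intro hq
        refine hBcl' q (Finset.mem_powerset.1 hBS hq) ?_
        rw [← hEq]; exact le_sp hq
      · intro hq
        refine hBcl q (Finset.mem_powerset.1 hBS' hq) ?_
        rw [hEq]; exact le_sp hq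
    rw [himg, Set.ncard_image_of_injOn hinj, Set.ncard_coe_finset]
  -- the injection into (d+2)-subsets
  have hmain : ∑ A ∈ Δ, (S \ cl A).card ≤ n.choose (d+2) := by
    rw [← Finset.card_sigma, ← hcard, ← Finset.card_powersetCard (d+2) S]
    refine Finset.card_le_card_of_injOn (fun x => insert x.2 x.1) ?_ ?_
    · rintro ⟨A, p⟩ hx
      rw [Finset.mem_coe, Finset.mem_sigma] at hx
      obtain ⟨hAΔ, hpx⟩ := hx
      rw [Finset.mem_sdiff] at hpx
      have hpA : p ∉ A := fun h => hpx.2 (hsubcl A hAΔ h)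
      refine Finset.mem_powersetCard.2 ⟨Finset.insert_subset hpx.1 (hΔmem A hAΔ).1, ?_⟩
      rw [Finset.card_insert_of_notMem hpA, (hΔmem A hAΔ).2.1]
    · rintro ⟨A, p⟩ hx ⟨A', p'⟩ hx' hEq
      rw [Finset.mem_coe, Finset.mem_sigma] at hx hx'
      obtain ⟨hAΔ, hpx⟩ := hx
      obtain ⟨hA'Δ, hpx'⟩ := hx'
      obtain ⟨h1', h2'⟩ := huniq A hAΔ A' hA'Δ p hpx p' hpx' hEq
      subst h1'; subst h2'; rfl
  -- chain of rewritings
  set Call' := Call.filter (fun B => B.card ≤ n - 1) with hCall'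
  have hCall'mem : ∀ B ∈ Call', d + 1 ≤ B.card ∧ B.card ≤ n - 1 := by
    intro B hB
    obtain ⟨hB1, hB2⟩ := Finset.mem_filter.1 hB
    exact ⟨(Finset.mem_filter.1 hB1).2.1, hB2⟩
  have hmaps : ∀ B ∈ Call', B.card - d ∈ Finset.Icc 1 (n - d - 1) := by
    intro B hB
    obtain ⟨h1', h2'⟩ := hCall'mem B hB
    rw [Finset.mem_Icc]; omega
  have step1 : ∀ i ∈ Finset.Icc 1 (n - d - 1),
      (n - d - i) * ((d + i).choose (i - 1)) * τ (d + i)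
      = ∑ B ∈ Call'.filter (fun B => B.card - d = i),
          (n - B.card) * (B.card.choose (d + 1)) := by
    intro i hi
    rw [Finset.mem_Icc] at hi
    have hfeq : Call'.filter (fun B => B.card - d = i)
        = Call.filter (fun B => B.card = d + i) := by
      rw [hCall', Finset.filter_filter]
      apply Finset.filter_congr
      intro B hB
      have hBc : d + 1 ≤ B.card := (Finset.mem_filter.1 hB).2.1
      omega
    rw [hfeq, hτ' (d + i) (by omega)]
    have hsum : ∑ B ∈ Call.filter (fun B => B.card = d + i), (n - B.card) * (B.card.choose (d+1))
        = ∑ _B ∈ Call.filter (fun B => B.card = d + i), (n - d - i) * ((d+i).choose (i-1)) := by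
      refine Finset.sum_congr rfl fun B hB => ?_
      have hBc : B.card = d + i := (Finset.mem_filter.1 hB).2
      rw [hBc]
      congr 1
      · omega
      · rw [show i - 1 = (d + i) - (d + 1) by omega]
        exact (Nat.choose_symm (by omega)).symm
    rw [hsum, Finset.sum_const, smul_eq_mul]
    ring
  have hstep2 : ∑ B ∈ Call, (n - B.card) * (B.card.choose (d+1)) = ∑ A ∈ Δ, (S \ cl A).card := by
    rw [← Finset.sum_fiberwise_of_maps_to hclmem (fun A => (S \ cl A).card)]
    refine Finset.sum_congr rfl fun B hB => ?_
    rw [hfiber B hB]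
    have hBS : B ⊆ S := Finset.mem_powerset.1 (Finset.mem_filter.1 hB).1
    have hconst : ∀ A ∈ B.powersetCard (d+1), (S \ cl A).card = n - B.card := by
      intro A hA
      have hAfib : A ∈ Δ.filter (fun A => cl A = B) := by rw [hfiber B hB]; exact hA
      have hclA : cl A = B := (Finset.mem_filter.1 hAfib).2
      rw [hclA, Finset.card_sdiff_of_subset hBS, hcard]
    rw [Finset.sum_congr rfl hconst, Finset.sum_const, smul_eq_mul,
      Finset.card_powersetCard, mul_comm]
  calc ∑ i ∈ Finset.Icc 1 (n - d - 1), (n - d - i) * ((d + i).choose (i - 1)) * τ (d + i)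
      = ∑ i ∈ Finset.Icc 1 (n - d - 1), ∑ B ∈ Call'.filter (fun B => B.card - d = i),
          (n - B.card) * (B.card.choose (d + 1)) := Finset.sum_congr rfl step1
    _ = ∑ B ∈ Call', (n - B.card) * (B.card.choose (d + 1)) :=
        Finset.sum_fiberwise_of_maps_to hmaps _
    _ ≤ ∑ B ∈ Call, (n - B.card) * (B.card.choose (d + 1)) :=
        Finset.sum_le_sum_of_subset (Finset.filter_subset _ _)
    _ = ∑ A ∈ Δ, (S \ cl A).card := hstep2
    _ ≤ n.choose (d + 2) := hmain
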